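/- Let U ⊆ ℝ^d be open, let f : U → ℝ be Lipschitz on U, and let U₀ ⊆ U be a subset such that U \ U₀ has Lebesgue measure zero and f is differentiable at every point of U₀. Fix q ∈ U and define K_f^{U₀}(q) ⊆ (ℝ^d)^* as the set of all limit points of sequences (df(q_n))_{n≥0} where q_n ∈ U₀ and q_n → q, and let C_f^{U₀}(q) be the convex hull of K_f^{U₀}(q). If f is differentiable at q, then df(q) ∈ C_f^{U₀}(q). -/

import Mathlib

open Filter MeasureTheory Metric Set

open Topology intervalIntegral

set_option maxHeartbeats 1000000



-- Riesz representation of functionals on the dual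
lemma exists_eval {E : Type*} [NormedAddCommGroup E] [InnerProductSpace ℝ E]
    [CompleteSpace E] [FiniteDimensional ℝ E] (g : (E →L[ℝ] ℝ) →L[ℝ] ℝ) :
    ∃ v : E, ∀ p : E →L[ℝ] ℝ, g p = p v := by
  set T := InnerProductSpace.toDual ℝ E with hT
  have hlin : ∀ (c : ℝ) (x : E), T (c • x) = c • T x := by
    intro c x; simp [T]
  let lin : E →ₗ[ℝ] ℝ :=
    { toFun := fun x => g (T x)
      map_add' := by intro x y; simp
      map_smul' := by intro c x; simp [hlin] }
  let u : E →L[ℝ] ℝ := LinearMap.toContinuousLinearMap lin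
  refine ⟨T.symm u, fun p => ?_⟩
  have h1 : g p = u (T.symm p) := by
    show g p = lin (T.symm p)
    simp [lin, T.apply_symm_apply]
  have h2 : u (T.symm p) = (T (T.symm u)) (T.symm p) := by
    rw [T.apply_symm_apply]
  rw [h1, h2, InnerProductSpace.toDual_apply_apply, real_inner_comm,
    ← InnerProductSpace.toDual_apply_apply, T.apply_symm_apply]

private lemma sum_extend_eq {ι κ M : Type*} [Fintype ι] [Fintype κ] [AddCommMonoid M]
    (emb : ι ↪ κ) (F : κ → M) (hF : ∀ i, (¬∃ j, emb j = i) → F i = 0) :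
    ∑ i, F i = ∑ j, F (emb j) := by
  rw [← Finset.sum_map Finset.univ emb F]
  refine (Finset.sum_subset (Finset.subset_univ _) ?_).symm
  intro i _ hni
  refine hF i ?_
  rintro ⟨j, rfl⟩
  exact hni (Finset.mem_map_of_mem emb (Finset.mem_univ j))

lemma isCompact_convexHull' {E : Type*} [NormedAddCommGroup E] [NormedSpace ℝ E]
    [FiniteDimensional ℝ E] {s : Set E} (hs : IsCompact s) :
    IsCompact (convexHull ℝ s) := by
  classical
  rcases s.eq_empty_or_nonempty with rfl | ⟨e, he⟩
  · simp
  set N := Module.finrank ℝ E + 1 with hN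
  have hcont : Continuous (fun p : (Fin N → ℝ) × (Fin N → E) => ∑ i, p.1 i • p.2 i) := by
    apply continuous_finset_sum
    intro i _
    exact ((continuous_apply i).comp continuous_fst).smul
      ((continuous_apply i).comp continuous_snd)
  have hTcomp : IsCompact ((stdSimplex ℝ (Fin N)) ×ˢ (Set.univ.pi fun _ : Fin N => s)) :=
    IsCompact.prod (isCompact_stdSimplex (𝕜 := ℝ) (ι := Fin N)) (isCompact_univ_pi fun _ => hs)
  have himage : convexHull ℝ s =
      (fun p : (Fin N → ℝ) × (Fin N → E) => ∑ i, p.1 i • p.2 i) ''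
        ((stdSimplex ℝ (Fin N)) ×ˢ (Set.univ.pi fun _ : Fin N => s)) := by
    apply Subset.antisymm
    · intro y hy
      obtain ⟨ι, hι, z, w, hzs, hai, hw0, hw1, hwz⟩ :=
        eq_pos_convex_span_of_mem_convexHull hy
      have hcard : Fintype.card ι ≤ N := by
        calc Fintype.card ι ≤ Module.finrank ℝ (vectorSpan ℝ (Set.range z)) + 1 :=
              hai.card_le_finrank_succ
        _ ≤ N := by
              have := Submodule.finrank_le (vectorSpan ℝ (Set.range z))
              omega
      obtain ⟨emb⟩ : Nonempty (ι ↪ Fin N) := by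
        refine Function.Embedding.nonempty_of_card_le ?_
        simpa using hcard
      refine ⟨(Function.extend emb w 0, Function.extend emb z (fun _ => e)),
        ⟨⟨?_, ?_⟩, ?_⟩, ?_⟩
      · intro i
        dsimp only
        rcases em (∃ j, emb j = i) with ⟨j, rfl⟩ | hni
        · rw [Function.Injective.extend_apply emb.injective]
          exact (hw0 j).le
        · rw [Function.extend_apply' _ _ _ hni]
          rfl
      · dsimp only
        rw [sum_extend_eq emb _ (fun i hni => by
          rw [Function.extend_apply' _ _ _ hni]; rfl)]
        rw [← hw1]
        exact Finset.sum_congr rfl fun j _ =>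
          Function.Injective.extend_apply emb.injective _ _ _
      · intro i _
        dsimp only
        rcases em (∃ j, emb j = i) with ⟨j, rfl⟩ | hni
        · rw [Function.Injective.extend_apply emb.injective]
          exact hzs ⟨j, rfl⟩
        · rw [Function.extend_apply' _ _ _ hni]
          exact he
      · dsimp only
        rw [sum_extend_eq emb (fun i => Function.extend emb w 0 i • Function.extend emb z (fun _ => e) i)
          (fun i hni => by
            rw [Function.extend_apply' _ _ _ hni, Pi.zero_apply, zero_smul])]
        rw [← hwz]
        refine Finset.sum_congr rfl fun j _ => ?_
        rw [Function.Injective.extend_apply emb.injective,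
          Function.Injective.extend_apply emb.injective]
    · rintro _ ⟨⟨w, x⟩, ⟨⟨hw0, hw1⟩, hx⟩, rfl⟩
      exact (convex_convexHull ℝ s).sum_mem (fun i _ => hw0 i) hw1
        (fun i _ => subset_convexHull ℝ s (hx i (Set.mem_univ i)))
  rw [himage]
  exact hTcomp.image hcont

lemma lemA {g G : ℝ → ℝ} {K' m t a : ℝ} (ht : 0 < t) (ha : 0 < a) (hK' : 0 ≤ K')
    (hg : ∀ s1 ∈ Icc (0:ℝ) (t+a), ∀ s2 ∈ Icc (0:ℝ) (t+a), |g s1 - g s2| ≤ K' * |s1 - s2|)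
    (hG : Measurable G)
    (hd : ∀ᵐ s, s ∈ Ioc 0 t → HasDerivAt g (G s) s ∧ G s ≤ m ∧ |G s| ≤ K') :
    g t - g 0 ≤ m * t := by
  -- continuity of g on the interval
  have hgc : ContinuousOn g (Icc 0 (t+a)) := by
    refine LipschitzOnWith.continuousOn (K := ⟨K', hK'⟩) ?_
    refine LipschitzOnWith.of_dist_le_mul ?_
    intro x hx y hy
    rw [Real.dist_eq, Real.dist_eq]
    exact hg x hx y hy
  have hmem : ∀ {b : ℝ}, 0 ≤ b → b ≤ t + a → b ∈ Icc (0:ℝ) (t+a) := fun h1 h2 => ⟨h1, h2⟩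
  have gInt : ∀ b c : ℝ, b ∈ Icc (0:ℝ) (t+a) → c ∈ Icc (0:ℝ) (t+a) →
      IntervalIntegrable g volume b c := by
    intro b c hb hc
    refine ContinuousOn.intervalIntegrable (hgc.mono ?_)
    exact Set.uIcc_subset_Icc hb hc
  set h : ℕ → ℝ := fun n => a / (n + 1) with hh
  have hh0 : ∀ n, 0 < h n := fun n => div_pos ha (by positivity)
  have hhle : ∀ n, h n ≤ a := by
    intro n
    rw [hh]
    calc a / (n + 1 : ℝ) ≤ a / 1 := by
          apply div_le_div_of_nonneg_left ha.le one_pos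
          simp [Nat.cast_nonneg]
    _ = a := div_one a
  have hhlim : Tendsto h atTop (𝓝 0) := by
    have : Tendsto (fun n : ℕ => (1:ℝ) / (n + 1)) atTop (𝓝 0) :=
      tendsto_one_div_add_atTop_nhds_zero_nat
    have := this.const_mul a
    simpa [hh, div_eq_mul_inv, mul_comm, mul_assoc, mul_left_comm] using this
  -- the integrals
  set F : ℕ → ℝ → ℝ := fun n s => (g (s + h n) - g s) / h n with hF
  set I : ℕ → ℝ := fun n => ∫ s in Ioc (0:ℝ) t, F n s with hI
  -- Claim 1 : I n → g t - g 0
  have claim1 : Tendsto I atTop (𝓝 (g t - g 0)) := by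
    have mem0 : (0:ℝ) ∈ Icc (0:ℝ) (t+a) := ⟨le_refl 0, by linarith⟩
    have memt : t ∈ Icc (0:ℝ) (t+a) := ⟨ht.le, by linarith⟩
    have memta : ∀ n, t + h n ∈ Icc (0:ℝ) (t+a) :=
      fun n => ⟨by linarith [hh0 n], by linarith [hhle n]⟩
    have memh : ∀ n, h n ∈ Icc (0:ℝ) (t+a) :=
      fun n => ⟨(hh0 n).le, by linarith [hhle n]⟩
    have int_shift : ∀ n, IntervalIntegrable (fun s => g (s + h n)) volume 0 t := by
      intro n
      refine ContinuousOn.intervalIntegrable ?_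
      refine hgc.comp (continuous_add_right (h n)).continuousOn ?_
      intro s hs
      rw [Set.uIcc_of_le ht.le] at hs
      show s + h n ∈ Icc (0:ℝ) (t+a)
      exact ⟨by linarith [hs.1, (hh0 n).le], by linarith [hs.2, hhle n]⟩
    have key : ∀ n, I n = ((∫ u in t..(t + h n), g u) - ∫ u in (0:ℝ)..(h n), g u) / h n := by
      intro n
      have hIn : I n = ∫ s in (0:ℝ)..t, F n s := (intervalIntegral.integral_of_le ht.le).symm
      rw [hIn, hF]
      simp only []
      rw [intervalIntegral.integral_div]
      rw [intervalIntegral.integral_sub (int_shift n) (gInt 0 t mem0 memt)]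
      have hshift : (∫ s in (0:ℝ)..t, g (s + h n)) = ∫ u in (h n)..(t + h n), g u := by
        have := intervalIntegral.integral_comp_add_right (a := (0:ℝ)) (b := t) g (h n)
        rw [this, zero_add]
      rw [hshift]
      have h1 : (∫ u in (0:ℝ)..(h n), g u) + (∫ u in (h n)..(t + h n), g u)
          = ∫ u in (0:ℝ)..(t + h n), g u :=
        intervalIntegral.integral_add_adjacent_intervals
          (gInt 0 (h n) mem0 (memh n)) (gInt (h n) (t + h n) (memh n) (memta n))
      have h2 : (∫ u in (0:ℝ)..t, g u) + (∫ u in t..(t + h n), g u)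
          = ∫ u in (0:ℝ)..(t + h n), g u :=
        intervalIntegral.integral_add_adjacent_intervals
          (gInt 0 t mem0 memt) (gInt t (t + h n) memt (memta n))
      have hnum : (∫ u in (h n)..(t + h n), g u) - (∫ u in (0:ℝ)..t, g u)
          = (∫ u in t..(t + h n), g u) - ∫ u in (0:ℝ)..(h n), g u := by
        linarith [h1, h2]
      rw [hnum]
    have boundA : ∀ n, |(∫ u in t..(t + h n), g u) / h n - g t| ≤ K' * h n := by
      intro n
      have hsub : (∫ u in t..(t + h n), g u) - (h n) * g t
          = ∫ u in t..(t + h n), (g u - g t) := by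
        rw [intervalIntegral.integral_sub (gInt t (t + h n) memt (memta n))
          intervalIntegrable_const, intervalIntegral.integral_const, smul_eq_mul,
          add_sub_cancel_left]
      have hbd : ‖∫ u in t..(t + h n), (g u - g t)‖ ≤ (K' * h n) * |t + h n - t| := by
        refine intervalIntegral.norm_integral_le_of_norm_le_const ?_
        intro u hu
        rw [Set.uIoc_of_le (by linarith [hh0 n])] at hu
        have hu1 : u ∈ Icc (0:ℝ) (t+a) :=
          ⟨by linarith [hu.1], by linarith [hu.2, hhle n]⟩
        rw [Real.norm_eq_abs]
        calc |g u - g t| ≤ K' * |u - t| := hg u hu1 t memt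
        _ ≤ K' * h n := by
              refine mul_le_mul_of_nonneg_left ?_ hK'
              rw [abs_of_nonneg (by linarith [hu.1])]
              linarith [hu.2]
      have habs : |t + h n - t| = h n := by
        rw [add_sub_cancel_left, abs_of_pos (hh0 n)]
      rw [habs, Real.norm_eq_abs] at hbd
      have heq2 : (∫ u in t..(t + h n), g u) / h n - g t
          = ((∫ u in t..(t + h n), g u) - (h n) * g t) / h n := by
        rw [sub_div, mul_div_cancel_left₀ _ (hh0 n).ne']
      rw [heq2, abs_div, abs_of_pos (hh0 n), div_le_iff₀ (hh0 n), hsub]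
      linarith [hbd]
    have boundB : ∀ n, |(∫ u in (0:ℝ)..(h n), g u) / h n - g 0| ≤ K' * h n := by
      intro n
      have hsub : (∫ u in (0:ℝ)..(h n), g u) - (h n) * g 0
          = ∫ u in (0:ℝ)..(h n), (g u - g 0) := by
        rw [intervalIntegral.integral_sub (gInt 0 (h n) mem0 (memh n))
          intervalIntegrable_const, intervalIntegral.integral_const, smul_eq_mul,
          sub_zero]
      have hbd : ‖∫ u in (0:ℝ)..(h n), (g u - g 0)‖ ≤ (K' * h n) * |h n - 0| := by
        refine intervalIntegral.norm_integral_le_of_norm_le_const ?_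
        intro u hu
        rw [Set.uIoc_of_le (hh0 n).le] at hu
        have hu1 : u ∈ Icc (0:ℝ) (t+a) :=
          ⟨by linarith [hu.1], by linarith [hu.2, hhle n, ht]⟩
        rw [Real.norm_eq_abs]
        calc |g u - g 0| ≤ K' * |u - 0| := hg u hu1 0 mem0
        _ ≤ K' * h n := by
              refine mul_le_mul_of_nonneg_left ?_ hK'
              rw [sub_zero, abs_of_nonneg (by linarith [hu.1])]
              exact hu.2
      have habs : |h n - 0| = h n := by
        rw [sub_zero, abs_of_pos (hh0 n)]
      rw [habs, Real.norm_eq_abs] at hbd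
      have heq2 : (∫ u in (0:ℝ)..(h n), g u) / h n - g 0
          = ((∫ u in (0:ℝ)..(h n), g u) - (h n) * g 0) / h n := by
        rw [sub_div, mul_div_cancel_left₀ _ (hh0 n).ne']
      rw [heq2, abs_div, abs_of_pos (hh0 n), div_le_iff₀ (hh0 n), hsub]
      linarith [hbd]
    have hnorm : ∀ n, ‖I n - (g t - g 0)‖ ≤ (2 * K') * h n := by
      intro n
      rw [key n, Real.norm_eq_abs]
      have : ((∫ u in t..(t + h n), g u) - ∫ u in (0:ℝ)..(h n), g u) / h n - (g t - g 0)
          = ((∫ u in t..(t + h n), g u) / h n - g t)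
            - ((∫ u in (0:ℝ)..(h n), g u) / h n - g 0) := by
        field_simp
        ring
      rw [this]
      calc |_ - _| ≤ |(∫ u in t..(t + h n), g u) / h n - g t|
            + |(∫ u in (0:ℝ)..(h n), g u) / h n - g 0| := abs_sub _ _
      _ ≤ K' * h n + K' * h n := add_le_add (boundA n) (boundB n)
      _ = (2 * K') * h n := by ring
    have hlim2 : Tendsto (fun n => (2 * K') * h n) atTop (𝓝 0) := by
      simpa using hhlim.const_mul (2 * K')
    have : Tendsto (fun n => I n - (g t - g 0)) atTop (𝓝 0) :=
      squeeze_zero_norm hnorm hlim2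
    have := this.add_const (g t - g 0)
    simpa using this
  -- Claim 2 : I n → ∫ G
  have claim2 : Tendsto I atTop (𝓝 (∫ s in Ioc (0:ℝ) t, G s)) := by
    refine tendsto_integral_of_dominated_convergence (fun _ => K') ?_ ?_ ?_ ?_
    · intro n
      refine ContinuousOn.aestronglyMeasurable ?_ measurableSet_Ioc
      refine ContinuousOn.div_const ?_ _
      refine ContinuousOn.sub ?_ (hgc.mono (fun s hs => ⟨hs.1.le, by linarith [hs.2]⟩))
      refine hgc.comp (continuous_add_right (h n)).continuousOn ?_
      intro s hs
      show s + h n ∈ Icc (0:ℝ) (t+a)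
      exact ⟨by linarith [hs.1.le, (hh0 n).le], by linarith [hs.2, hhle n]⟩
    · exact integrableOn_const measure_Ioc_lt_top.ne
    · intro n
      rw [ae_restrict_iff' measurableSet_Ioc]
      refine Eventually.of_forall (fun s hs => ?_)
      have h1 : s ∈ Icc (0:ℝ) (t+a) := ⟨hs.1.le, by linarith [hs.2]⟩
      have h2 : s + h n ∈ Icc (0:ℝ) (t+a) :=
        ⟨by linarith [hs.1, (hh0 n).le], by linarith [hs.2, hhle n]⟩
      rw [hF, Real.norm_eq_abs]
      simp only []
      rw [abs_div, abs_of_pos (hh0 n), div_le_iff₀ (hh0 n)]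
      have := hg _ h2 _ h1
      simpa [add_sub_cancel_left, abs_of_pos (hh0 n)] using this
    · rw [ae_restrict_iff' measurableSet_Ioc]
      filter_upwards [hd] with s hs hsm
      have hder := (hs hsm).1
      have hne : Tendsto h atTop (𝓝[≠] (0:ℝ)) := by
        refine tendsto_nhdsWithin_of_tendsto_nhds_of_eventually_within h hhlim ?_
        exact Eventually.of_forall (fun n => (hh0 n).ne')
      have := hder.tendsto_slope_zero.comp hne
      refine this.congr (fun n => ?_)
      rw [hF]
      simp only [Function.comp_apply, smul_eq_mul]
      rw [div_eq_inv_mul]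
  have heq : g t - g 0 = ∫ s in Ioc (0:ℝ) t, G s := tendsto_nhds_unique claim1 claim2
  rw [heq]
  -- final bound
  have hGle : ∀ᵐ s ∂(volume.restrict (Ioc (0:ℝ) t)), G s ≤ m := by
    rw [ae_restrict_iff' measurableSet_Ioc]
    filter_upwards [hd] with s hs hsm
    exact (hs hsm).2.1
  have hGabs : ∀ᵐ s ∂(volume.restrict (Ioc (0:ℝ) t)), ‖G s‖ ≤ K' := by
    rw [ae_restrict_iff' measurableSet_Ioc]
    filter_upwards [hd] with s hs hsm
    simpa [Real.norm_eq_abs] using (hs hsm).2.2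
  have hGint : IntegrableOn G (Ioc 0 t) := by
    refine Integrable.mono' (integrableOn_const measure_Ioc_lt_top.ne) 
      hG.aestronglyMeasurable hGabs
  calc ∫ s in Ioc (0:ℝ) t, G s ≤ ∫ _ in Ioc (0:ℝ) t, m :=
        integral_mono_ae hGint (integrableOn_const measure_Ioc_lt_top.ne) hGle
  _ = m * t := by
        rw [setIntegral_const, Real.volume_real_Ioc, smul_eq_mul]
        rw [max_eq_left (by linarith)]
        ring

lemma step {d : ℕ} {U : Set (EuclideanSpace ℝ (Fin d))} (hU : IsOpen U)
    {f : EuclideanSpace ℝ (Fin d) → ℝ} {K : NNReal} (hf : LipschitzOnWith K f U)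
    {U₀ : Set (EuclideanSpace ℝ (Fin d))} (hU₀U : U₀ ⊆ U)
    (hmeas : MeasureTheory.volume (U \ U₀) = 0)
    (hdiff : ∀ x ∈ U₀, DifferentiableAt ℝ f x)
    {q : EuclideanSpace ℝ (Fin d)} (hq : q ∈ U) (hdq : DifferentiableAt ℝ f q)
    (v : EuclideanSpace ℝ (Fin d)) {ε : ℝ} (hε : 0 < ε) :
    ∃ x, x ∈ U₀ ∧ x ∈ ball q ε ∧ fderiv ℝ f q v - ε < fderiv ℝ f x v := by
  classical
  obtain ⟨r, hr, hrU⟩ := Metric.isOpen_iff.mp hU q hq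
  set L := fderiv ℝ f q with hL
  by_contra hcon
  push_neg at hcon
  -- hcon : ∀ x, x ∈ U₀ → x ∈ ball q ε → fderiv ℝ f x v ≤ L v - ε
  set m := L v - ε with hm
  -- nonemptiness helper
  have hmem_ball : ∀ δ : ℝ, 0 < δ → ∃ x, x ∈ U₀ ∧ x ∈ ball q δ := by
    intro δ hδ
    by_contra hc
    push_neg at hc
    have hsub : ball q (min δ r) ⊆ U \ U₀ := by
      intro x hx
      have hx' : x ∈ ball q r := lt_of_lt_of_le hx (min_le_right δ r)
      refine ⟨hrU hx', fun hxU₀ => ?_⟩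
      exact hc x hxU₀ (lt_of_lt_of_le hx (min_le_left δ r))
    have h0 : volume (ball q (min δ r)) = 0 := measure_mono_null hsub hmeas
    exact (measure_ball_pos volume q (lt_min hδ hr)).ne' h0
  by_cases hv : v = 0
  · obtain ⟨x, hx₀, hxb⟩ := hmem_ball ε hε
    have := hcon x hx₀ hxb
    rw [hv] at this
    simp only [map_zero] at this
    have h0 : L v = 0 := by rw [hv]; simp
    rw [hm, h0] at this
    linarith
  -- main case
  have hnv : 0 < ‖v‖ := norm_pos_iff.mpr hv
  set nv := ‖v‖ with hnv'
  set ρ := min r ε with hρ'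
  have hρ : 0 < ρ := lt_min hr hε
  -- directional derivative at q
  have hder : HasDerivAt (fun s : ℝ => f (q + s • v)) (L v) 0 := by
    have h2 : HasDerivAt (fun s : ℝ => q + s • v) v 0 := by
      simpa using (((hasDerivAt_id (0:ℝ)).smul_const v).const_add q)
    have h1 : HasFDerivAt f L (q + (0:ℝ) • v) := by
      simpa using hdq.hasFDerivAt
    exact h1.comp_hasDerivAt 0 h2
  have hslope : Tendsto (fun s : ℝ => s⁻¹ * (f (q + s • v) - f q)) (𝓝[>] 0) (𝓝 (L v)) := by
    have := hder.tendsto_slope_zero_right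
    simpa using this
  -- choose t
  have ev1 : ∀ᶠ s in 𝓝[>] (0:ℝ), L v - ε/4 < s⁻¹ * (f (q + s • v) - f q) :=
    hslope.eventually (eventually_gt_nhds (by linarith))
  have ev2 : ∀ᶠ s in 𝓝[>] (0:ℝ), s < ρ/(4*nv) :=
    eventually_nhdsWithin_of_eventually_nhds (eventually_lt_nhds (by positivity))
  have ev3 : ∀ᶠ s in 𝓝[>] (0:ℝ), (0:ℝ) < s := eventually_mem_nhdsWithin
  obtain ⟨t, hts, htρ, ht0⟩ := (ev1.and (ev2.and ev3)).exists
  have htnv : t * nv < ρ/4 := by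
    rw [← lt_div_iff₀ hnv]
    calc t < ρ/(4*nv) := htρ
    _ = ρ/4/nv := by ring
  -- choose δ
  set δ := min (t * ε / (4 * ((K:ℝ) + 1))) (ρ/4) with hδ'
  have hδ : 0 < δ := lt_min (by positivity) (by positivity)
  have hδ1 : δ ≤ t * ε / (4 * ((K:ℝ) + 1)) := min_le_left _ _
  have hδ2 : δ ≤ ρ/4 := min_le_right _ _
  -- null superset
  obtain ⟨N', hN'sub, hN'meas, hN'null⟩ := exists_measurable_superset_of_null hmeas
  -- good y via Fubini
  set A : Set ((EuclideanSpace ℝ (Fin d)) × ℝ) :=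
    {p | p.2 ∈ Ioc 0 t ∧ p.1 + p.2 • v ∈ N'} with hA'
  have hAmeas : MeasurableSet A := by
    refine (measurable_snd measurableSet_Ioc).inter ?_
    have hcont2 : Continuous (fun p : (EuclideanSpace ℝ (Fin d)) × ℝ => p.1 + p.2 • v) :=
      continuous_fst.add (continuous_snd.smul continuous_const)
    exact hcont2.measurable hN'meas
  have hA0 : (volume.prod volume) A = 0 := by
    rw [Measure.prod_apply_symm hAmeas]
    have hzero : ∀ s : ℝ, volume ((fun y => (y, s)) ⁻¹' A) = 0 := by
      intro s
      by_cases hsm : s ∈ Ioc 0 t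
      · have : (fun y : EuclideanSpace ℝ (Fin d) => (y, s)) ⁻¹' A
            = (fun y : EuclideanSpace ℝ (Fin d) => y + s • v) ⁻¹' N' := by
          obtain ⟨hs1, hs2⟩ := hsm
          ext y
          simp [A, hs1, hs2]
        rw [this, measure_preimage_add_right]
        exact hN'null
      · have : (fun y : EuclideanSpace ℝ (Fin d) => (y, s)) ⁻¹' A = ∅ := by
          ext y
          simp only [A, mem_preimage, mem_setOf_eq, mem_empty_iff_false, iff_false,
            not_and]
          intro h1 _
          exact absurd h1 hsm
        rw [this]
        exact measure_empty
    calc (∫⁻ s, volume ((fun y => (y, s)) ⁻¹' A)) = ∫⁻ _, 0 := lintegral_congr hzero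
    _ = 0 := lintegral_zero
  have haey : ∀ᵐ y : EuclideanSpace ℝ (Fin d), volume (Prod.mk y ⁻¹' A) = 0 := by
    have := (Measure.measure_prod_null hAmeas).mp hA0
    filter_upwards [this] with y hy using hy
  obtain ⟨y, hyb, hyA⟩ : ∃ y, y ∈ ball q δ ∧ volume (Prod.mk y ⁻¹' A) = 0 := by
    by_contra hc
    push_neg at hc
    have hsub : ball q δ ⊆ {y | ¬ (volume (Prod.mk y ⁻¹' A) = 0)} :=
      fun y hy => hc y hy
    have h0 : volume (ball q δ) = 0 := measure_mono_null hsub (ae_iff.mp haey)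
    exact (measure_ball_pos volume q hδ).ne' h0
  -- setup for lemA
  set g : ℝ → ℝ := fun s => f (y + s • v) with hgdef
  set G : ℝ → ℝ := fun s => (fderiv ℝ f (y + s • v)) v with hGdef
  have hyq : dist y q < δ := mem_ball.mp hyb
  have hball2 : ∀ s : ℝ, s ∈ Icc 0 (t + t) → y + s • v ∈ ball q r := by
    intro s hs
    rw [mem_ball, dist_eq_norm]
    have : y + s • v - q = (y - q) + s • v := by abel
    rw [this]
    calc ‖(y - q) + s • v‖ ≤ ‖y - q‖ + ‖s • v‖ := norm_add_le _ _
    _ = ‖y - q‖ + |s| * nv := by rw [norm_smul, Real.norm_eq_abs]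
    _ < δ + 2 * (t * nv) := by
          have h1 : ‖y - q‖ < δ := by rwa [← dist_eq_norm]
          have h2 : |s| ≤ 2*t := by
            rw [abs_of_nonneg hs.1]; linarith [hs.2]
          have : |s| * nv ≤ 2*t*nv := mul_le_mul_of_nonneg_right h2 hnv.le
          nlinarith
    _ ≤ ρ/4 + 2 * (ρ/4) := by linarith [htnv, hδ2]
    _ ≤ r := by
          have : ρ ≤ r := min_le_left _ _
          linarith
  have hballε : ∀ s : ℝ, s ∈ Ioc 0 t → y + s • v ∈ ball q ε := by
    intro s hs
    rw [mem_ball, dist_eq_norm]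
    have : y + s • v - q = (y - q) + s • v := by abel
    rw [this]
    calc ‖(y - q) + s • v‖ ≤ ‖y - q‖ + ‖s • v‖ := norm_add_le _ _
    _ = ‖y - q‖ + |s| * nv := by rw [norm_smul, Real.norm_eq_abs]
    _ < δ + t * nv := by
          have h1 : ‖y - q‖ < δ := by rwa [← dist_eq_norm]
          have h2 : |s| ≤ t := by rw [abs_of_pos hs.1]; exact hs.2
          have : |s| * nv ≤ t*nv := mul_le_mul_of_nonneg_right h2 hnv.le
          linarith
    _ ≤ ρ/4 + ρ/4 := by linarith [htnv, hδ2]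
    _ ≤ ε := by
          have : ρ ≤ ε := min_le_right _ _
          linarith
  have hgLip : ∀ s1 ∈ Icc (0:ℝ) (t+t), ∀ s2 ∈ Icc (0:ℝ) (t+t),
      |g s1 - g s2| ≤ ((K:ℝ) * nv) * |s1 - s2| := by
    intro s1 hs1 s2 hs2
    have h1 : y + s1 • v ∈ U := hrU (hball2 s1 hs1)
    have h2 : y + s2 • v ∈ U := hrU (hball2 s2 hs2)
    have := hf.dist_le_mul _ h1 _ h2
    rw [Real.dist_eq] at this
    calc |g s1 - g s2| ≤ (K:ℝ) * dist (y + s1 • v) (y + s2 • v) := this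
    _ = ((K:ℝ) * nv) * |s1 - s2| := by
          rw [dist_eq_norm]
          have : y + s1 • v - (y + s2 • v) = (s1 - s2) • v := by
            rw [sub_smul]; abel
          rw [this, norm_smul, Real.norm_eq_abs]
          ring
  have hGmeas : Measurable G := by
    have hline : Measurable (fun s : ℝ => y + s • v) :=
      (continuous_const.add (continuous_id.smul continuous_const)).measurable
    exact (measurable_fderiv_apply_const ℝ f v).comp hline
  have hd : ∀ᵐ s : ℝ, s ∈ Ioc 0 t →
      HasDerivAt g (G s) s ∧ G s ≤ m ∧ |G s| ≤ (K:ℝ) * nv := by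
    have hae : ∀ᵐ s : ℝ, ¬ (s ∈ Ioc 0 t ∧ y + s • v ∈ N') := by
      have : volume {s : ℝ | s ∈ Ioc 0 t ∧ y + s • v ∈ N'} = 0 := hyA
      exact (measure_eq_zero_iff_ae_notMem.mp this)
    filter_upwards [hae] with s hns hsm
    have hx : y + s • v ∉ N' := fun hmem => hns ⟨hsm, hmem⟩
    have hxU : y + s • v ∈ U := hrU (hball2 s ⟨hsm.1.le, by linarith [hsm.2, ht0]⟩)
    have hxU₀ : y + s • v ∈ U₀ := by
      by_contra hc
      exact hx (hN'sub ⟨hxU, hc⟩)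
    refine ⟨?_, ?_, ?_⟩
    · have hline : HasDerivAt (fun s : ℝ => y + s • v) v s := by
        simpa using (((hasDerivAt_id s).smul_const v).const_add y)
      exact (hdiff _ hxU₀).hasFDerivAt.comp_hasDerivAt s hline
    · exact hcon _ hxU₀ (hballε s hsm)
    · have hKf : ‖fderiv ℝ f (y + s • v)‖ ≤ (K:ℝ) :=
        norm_fderiv_le_of_lipschitzOn ℝ (hU.mem_nhds hxU) hf
      calc |G s| ≤ ‖fderiv ℝ f (y + s • v)‖ * nv := by
            rw [← Real.norm_eq_abs]
            exact (fderiv ℝ f (y + s • v)).le_opNorm v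
      _ ≤ (K:ℝ) * nv := mul_le_mul_of_nonneg_right hKf hnv.le
  have hmain : g t - g 0 ≤ m * t :=
    lemA ht0 ht0 (by positivity) hgLip hGmeas hd
  -- comparison of difference quotients
  have hqU : q + t • v ∈ U := by
    refine hrU ?_
    rw [mem_ball, dist_eq_norm, add_sub_cancel_left, norm_smul, Real.norm_eq_abs,
      abs_of_pos ht0]
    have : ρ ≤ r := min_le_left _ _
    linarith [htnv]
  have hyU : y ∈ U := by
    refine hrU ?_
    rw [mem_ball]
    calc dist y q < δ := hyq
    _ ≤ ρ/4 := hδ2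
    _ < r := by
          have : ρ ≤ r := min_le_left _ _
          linarith
  have hytU : y + t • v ∈ U := hrU (hball2 t ⟨ht0.le, by linarith⟩)
  have hcomp : f (q + t • v) - f q ≤ (g t - g 0) + 2 * (K:ℝ) * δ := by
    have d1 : |f (q + t • v) - f (y + t • v)| ≤ (K:ℝ) * δ := by
      have := hf.dist_le_mul _ hqU _ hytU
      rw [Real.dist_eq] at this
      refine le_trans this ?_
      have : dist (q + t • v) (y + t • v) = dist q y := by
        rw [dist_eq_norm, dist_eq_norm]
        congr 1
        abel
      rw [this, dist_comm q y]
      exact mul_le_mul_of_nonneg_left hyq.le K.coe_nonneg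
    have d2 : |f y - f q| ≤ (K:ℝ) * δ := by
      have := hf.dist_le_mul _ hyU _ hq
      rw [Real.dist_eq] at this
      refine le_trans this ?_
      exact mul_le_mul_of_nonneg_left hyq.le K.coe_nonneg
    have hg0 : g 0 = f y := by
      simp [g]
    have hgt : g t = f (y + t • v) := rfl
    rw [hg0, hgt]
    have a1 := abs_le.mp d1
    have a2 := abs_le.mp d2
    linarith [a1.1, a1.2, a2.1, a2.2]
  have hslope2 : (L v - ε/4) * t < f (q + t • v) - f q := by
    have := hts
    rw [inv_mul_eq_div, lt_div_iff₀ ht0] at this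
    linarith [this]
  -- final contradiction
  have hKnn : (0:ℝ) ≤ (K:ℝ) := K.coe_nonneg
  have hfinal : (3*ε/4) * t < 2 * (K:ℝ) * δ := by
    have : (L v - ε/4) * t < (L v - ε) * t + 2 * (K:ℝ) * δ := by
      calc (L v - ε/4) * t < f (q + t • v) - f q := hslope2
      _ ≤ (g t - g 0) + 2 * (K:ℝ) * δ := hcomp
      _ ≤ m * t + 2 * (K:ℝ) * δ := by linarith [hmain]
    nlinarith [this]
  have hbound : 2 * (K:ℝ) * δ ≤ (ε/2) * t := by
    have h1 : 2 * (K:ℝ) * δ ≤ 2 * (K:ℝ) * (t * ε / (4 * ((K:ℝ) + 1))) := by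
      refine mul_le_mul_of_nonneg_left hδ1 (by positivity)
    refine le_trans h1 ?_
    have hpos : (0:ℝ) < 4 * ((K:ℝ) + 1) := by positivity
    have heq : 2 * (K:ℝ) * (t * ε / (4 * ((K:ℝ) + 1)))
        = (2 * (K:ℝ) * (t * ε)) / (4 * ((K:ℝ) + 1)) := by ring
    rw [heq, div_le_iff₀ hpos]
    nlinarith [ht0.le, hε.le, hKnn, mul_nonneg ht0.le hε.le]
  nlinarith [hfinal, hbound, ht0, hε]

/-- Clarke's lemma (Lemma 4.9): if `f` is Lipschitz on an open set `U ⊆ ℝ^d`,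
differentiable on a full-measure subset `U₀ ⊆ U`, and differentiable at `q ∈ U`,
then `df(q)` belongs to the convex hull of the set of limit points of sequences
`df(q_n)` with `q_n ∈ U₀`, `q_n → q`. -/
theorem clarke_lemma (d : ℕ) (U : Set (EuclideanSpace ℝ (Fin d))) (hU : IsOpen U)
    (f : EuclideanSpace ℝ (Fin d) → ℝ) (K : NNReal) (hf : LipschitzOnWith K f U)
    (U₀ : Set (EuclideanSpace ℝ (Fin d))) (hU₀U : U₀ ⊆ U)
    (hmeas : MeasureTheory.volume (U \ U₀) = 0)
    (hdiff : ∀ x ∈ U₀, DifferentiableAt ℝ f x)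
    (q : EuclideanSpace ℝ (Fin d)) (hq : q ∈ U) (hdq : DifferentiableAt ℝ f q) :
    fderiv ℝ f q ∈ convexHull ℝ
      {p : EuclideanSpace ℝ (Fin d) →L[ℝ] ℝ |
        ∃ x : ℕ → EuclideanSpace ℝ (Fin d),
          (∀ n, x n ∈ U₀) ∧ Tendsto x atTop (nhds q) ∧
          ∃ φ : ℕ → ℕ, StrictMono φ ∧
            Tendsto (fun n => fderiv ℝ f (x (φ n))) atTop (nhds p)} := by
  classical
  set S : Set (EuclideanSpace ℝ (Fin d) →L[ℝ] ℝ) :=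
    {p : EuclideanSpace ℝ (Fin d) →L[ℝ] ℝ |
      ∃ x : ℕ → EuclideanSpace ℝ (Fin d),
        (∀ n, x n ∈ U₀) ∧ Tendsto x atTop (nhds q) ∧
        ∃ φ : ℕ → ℕ, StrictMono φ ∧
          Tendsto (fun n => fderiv ℝ f (x (φ n))) atTop (nhds p)} with hS
  set L := fderiv ℝ f q with hL
  by_contra hLout
  have hone : Tendsto (fun n : ℕ => (1:ℝ) / (n + 1)) atTop (𝓝 0) :=
    tendsto_one_div_add_atTop_nhds_zero_nat
  have honepos : ∀ n : ℕ, (0:ℝ) < 1 / (n + 1) := fun n => by positivity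
  -- characterization of S
  have memS_iff : ∀ p, p ∈ S ↔ ∀ η : ℝ, 0 < η →
      ∃ x, x ∈ U₀ ∧ dist x q < η ∧ dist (fderiv ℝ f x) p < η := by
    intro p
    constructor
    · rintro ⟨x, hx₀, hxq, φ, hφ, hconv⟩ η hη
      have hxq' : Tendsto (fun n => x (φ n)) atTop (𝓝 q) :=
        hxq.comp hφ.tendsto_atTop
      obtain ⟨N1, hN1⟩ := (Metric.tendsto_atTop.mp hxq') η hη
      obtain ⟨N2, hN2⟩ := (Metric.tendsto_atTop.mp hconv) η hη
      exact ⟨x (φ (max N1 N2)), hx₀ _, hN1 _ (le_max_left _ _), hN2 _ (le_max_right _ _)⟩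
    · intro h
      choose x hx₀ hxq hxp using fun k : ℕ => h (1/(k+1)) (honepos k)
      have hxq' : Tendsto x atTop (𝓝 q) := by
        refine tendsto_iff_dist_tendsto_zero.mpr ?_
        exact squeeze_zero (fun k => dist_nonneg) (fun k => (hxq k).le) hone
      have hxp' : Tendsto (fun k => fderiv ℝ f (x k)) atTop (𝓝 p) := by
        refine tendsto_iff_dist_tendsto_zero.mpr ?_
        exact squeeze_zero (fun k => dist_nonneg) (fun k => (hxp k).le) hone
      exact ⟨x, hx₀, hxq', id, strictMono_id, hxp'⟩
  -- norm bound
  have hKb : ∀ x ∈ U₀, fderiv ℝ f x ∈ closedBall (0 : EuclideanSpace ℝ (Fin d) →L[ℝ] ℝ) K := by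
    intro x hx
    rw [mem_closedBall_zero_iff]
    exact norm_fderiv_le_of_lipschitzOn ℝ (hU.mem_nhds (hU₀U hx)) hf
  have hSb : S ⊆ closedBall (0 : EuclideanSpace ℝ (Fin d) →L[ℝ] ℝ) K := by
    rintro p ⟨x, hx₀, hxq, φ, hφ, hconv⟩
    refine IsClosed.mem_of_tendsto isClosed_closedBall hconv ?_
    exact Eventually.of_forall fun n => hKb _ (hx₀ (φ n))
  have hSclosed : IsClosed S := by
    refine isClosed_of_closure_subset ?_
    intro p hp
    rw [memS_iff]
    intro η hη
    obtain ⟨p', hp'S, hp'd⟩ := Metric.mem_closure_iff.mp hp (η/2) (by linarith)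
    obtain ⟨x, hx₀, hxq, hxp⟩ := (memS_iff p').mp hp'S (η/2) (by linarith)
    refine ⟨x, hx₀, by linarith, ?_⟩
    calc dist (fderiv ℝ f x) p ≤ dist (fderiv ℝ f x) p' + dist p' p := dist_triangle _ _ _
    _ < η/2 + η/2 := add_lt_add hxp (by rw [dist_comm]; exact hp'd)
    _ = η := by ring
  have hScompact : IsCompact S :=
    Metric.isCompact_of_isClosed_isBounded hSclosed (isBounded_closedBall.subset hSb)
  have hhullcompact : IsCompact (convexHull ℝ S) := isCompact_convexHull' hScompact
  -- separation
  obtain ⟨g0, c, hg0L, hg0S⟩ := geometric_hahn_banach_point_closed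
    (convex_convexHull ℝ S) hhullcompact.isClosed hLout
  obtain ⟨v, hv⟩ := exists_eval (-g0)
  have hLv : -c < L v := by
    have := hv L
    simp only [ContinuousLinearMap.neg_apply] at this
    linarith [hg0L, this.symm.le, this.le]
  have hSv : ∀ p ∈ convexHull ℝ S, p v < -c := by
    intro p hp
    have := hv p
    simp only [ContinuousLinearMap.neg_apply] at this
    linarith [hg0S p hp]
  -- build sequence using step
  have hstep : ∀ n : ℕ, ∃ x, x ∈ U₀ ∧ x ∈ ball q (1/(n+1)) ∧
      L v - 1/(n+1) < fderiv ℝ f x v :=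
    fun n => step hU hf hU₀U hmeas hdiff hq hdq v (honepos n)
  choose x hx₀ hxb hxv using hstep
  have hxq : Tendsto x atTop (𝓝 q) := by
    refine tendsto_iff_dist_tendsto_zero.mpr ?_
    exact squeeze_zero (fun k => dist_nonneg) (fun k => (mem_ball.mp (hxb k)).le) hone
  have hcb : IsCompact (closedBall (0 : EuclideanSpace ℝ (Fin d) →L[ℝ] ℝ) K) :=
    isCompact_closedBall _ _
  obtain ⟨p, hpball, φ, hφ, hconv⟩ := hcb.tendsto_subseq (fun n => hKb _ (hx₀ n))
  have hpS : p ∈ S := ⟨x, hx₀, hxq, φ, hφ, hconv⟩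
  have hev : Tendsto (fun n => fderiv ℝ f (x (φ n)) v) atTop (𝓝 (p v)) := by
    have hc : Continuous (fun P : EuclideanSpace ℝ (Fin d) →L[ℝ] ℝ => P v) :=
      (ContinuousLinearMap.apply ℝ ℝ v).continuous
    exact (hc.tendsto p).comp hconv
  have hlow : ∀ n : ℕ, L v - 1/(n+1) ≤ fderiv ℝ f (x (φ n)) v := by
    intro n
    have hn : (n:ℝ) ≤ (φ n : ℝ) := Nat.cast_le.mpr hφ.le_apply
    have h1 : (1:ℝ)/((φ n : ℝ) + 1) ≤ 1/((n:ℝ)+1) :=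
      one_div_le_one_div_of_le (by positivity) (by linarith)
    linarith [hxv (φ n)]
  have htends : Tendsto (fun n : ℕ => L v - 1/((n:ℝ)+1)) atTop (𝓝 (L v)) := by
    have h2 := (tendsto_const_nhds (x := L v) (f := atTop (α := ℕ))).sub hone
    simpa using h2
  have hple : L v ≤ p v :=
    le_of_tendsto_of_tendsto' htends hev hlow
  have := hSv p (subset_convexHull ℝ S hpS)
  linarith
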